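/- Let q be a primitive ℓ-th root of unity, c, w ∈ ℂ with 1+cw ≠ 0, γ an ℓ-th root of 1+cw, and D_P := D_q(C)/D_q(C)(x^ℓ − c, ∂^ℓ − w, α − γ). Then for 1 ≤ m ≤ ℓ, the identities c·∂^m = ∏_{i=ℓ−m+1}^{ℓ}(q^{2i}γ − 1) x^{ℓ−m} and w·x^m = ∏_{i=1}^{m}(q^{2i}γ − 1) ∂^{ℓ−m} hold in D_P. -/
import Mathlib


/-!
`Dq q` is the ℂ-algebra of q-difference operators on ℂ, generated by `x` and `∂`
subject to the relation `∂x = q²x∂ + (q²−1)`.  `Dα` is the Euler operator `α = 1 + x∂`.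
-/

noncomputable section

/-- The defining relation of `D_q(ℂ)`: `∂ * x = q² • (x * ∂) + (q² - 1) • 1`.
Here the generator `false` is `x` and `true` is `∂`. -/
inductive DqRel (q : ℂ) : FreeAlgebra ℂ Bool → FreeAlgebra ℂ Bool → Prop
  | rel : DqRel q (FreeAlgebra.ι ℂ true * FreeAlgebra.ι ℂ false)
      ((q ^ 2) • (FreeAlgebra.ι ℂ false * FreeAlgebra.ι ℂ true)
        + (q ^ 2 - 1) • (1 : FreeAlgebra ℂ Bool))

/-- The algebra `D_q(ℂ)` of q-difference operators on `ℂ`. -/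
abbrev Dq (q : ℂ) : Type := RingQuot (DqRel q)

/-- The generator `x` of `D_q(ℂ)`. -/
def Dx (q : ℂ) : Dq q := RingQuot.mkAlgHom ℂ (DqRel q) (FreeAlgebra.ι ℂ false)

/-- The generator `∂` of `D_q(ℂ)`. -/
def Dd (q : ℂ) : Dq q := RingQuot.mkAlgHom ℂ (DqRel q) (FreeAlgebra.ι ℂ true)

/-- The Euler operator `α = 1 + x∂`. -/
def Dα (q : ℂ) : Dq q := 1 + Dx q * Dd q

lemma rel0 (q : ℂ) : Dd q * Dx q = (q^2) • (Dx q * Dd q) + (q^2-1) • (1 : Dq q) := by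
  have h := RingQuot.mkAlgHom_rel ℂ (DqRel.rel (q := q))
  simpa [Dd, Dx, map_mul, map_add, map_smul, map_one] using h

lemma rel2 (q : ℂ) : Dd q * Dx q = (q^2) • Dα q - (1 : Dq q) := by
  rw [rel0, Dα, smul_add]; module

lemma relax (q : ℂ) : Dα q * Dx q = (q^2) • (Dx q * Dα q) := by
  rw [Dα, add_mul, one_mul, mul_assoc, rel0, mul_add, mul_smul_comm, mul_smul_comm,
    mul_one, mul_add, mul_one, ← mul_assoc]
  module

lemma relda (q : ℂ) : Dd q * Dα q = (q^2) • (Dα q * Dd q) := by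
  rw [Dα, mul_add, mul_one, add_mul, one_mul, ← mul_assoc, rel0, add_mul, smul_mul_assoc,
    smul_mul_assoc, one_mul, mul_assoc]
  module

lemma relaxk (q : ℂ) (k : ℕ) : Dα q * (Dx q)^k = (q^(2*k)) • ((Dx q)^k * Dα q) := by
  induction k with
  | zero => simp
  | succ n ih =>
    rw [show n+1 = 1+n by ring, pow_add, pow_one, ← mul_assoc, relax, smul_mul_assoc,
      mul_assoc, ih, mul_smul_comm, smul_smul, ← mul_assoc, ← pow_succ']
    ring_nf

lemma reldak (q : ℂ) (k : ℕ) : (Dd q)^k * Dα q = (q^(2*k)) • (Dα q * (Dd q)^k) := by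
  induction k with
  | zero => simp
  | succ n ih =>
    rw [pow_succ, mul_assoc, relda, mul_smul_comm, ← mul_assoc, ih, smul_mul_assoc,
      smul_smul, mul_assoc, ← pow_succ]
    ring_nf

lemma keyx (q : ℂ) (k n : ℕ) :
    (Dd q)^(n+1) * (Dx q)^(k+(n+1)) =
      (q^(2*(k+n+1))) • ((Dd q)^n * (Dx q)^(k+n) * Dα q) - (Dd q)^n * (Dx q)^(k+n) := by
  rw [pow_succ, show k+(n+1)=(k+n)+1 from rfl, pow_succ' (Dx q), mul_assoc,
    ← mul_assoc (Dd q), rel2, sub_mul, smul_mul_assoc, relaxk, one_mul, mul_sub,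
    mul_smul_comm, mul_smul_comm, smul_smul, ← mul_assoc, ← pow_add]
  ring_nf

lemma keyd (q : ℂ) (k n : ℕ) :
    (q^(2*(k+n))) • ((Dx q)^(n+1) * (Dd q)^(k+(n+1))) =
      (Dx q)^n * (Dd q)^(k+n) * Dα q - (q^(2*(k+n))) • ((Dx q)^n * (Dd q)^(k+n)) := by
  have hxd : Dx q * Dd q = Dα q - 1 := by rw [Dα]; abel
  rw [pow_succ, show k+(n+1)=(k+n)+1 from rfl, pow_succ' (Dd q), mul_assoc,
    ← mul_assoc (Dx q), hxd, sub_mul, one_mul, mul_sub, mul_assoc, smul_sub,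
    ← mul_smul_comm, ← reldak, ← mul_assoc]

abbrev Ig (q : ℂ) (ℓ : ℕ) (c w γ : ℂ) : Submodule (Dq q) (Dq q) :=
  Submodule.span (Dq q)
    {(Dx q) ^ ℓ - algebraMap ℂ (Dq q) c,
     (Dd q) ^ ℓ - algebraMap ℂ (Dq q) w,
     Dα q - algebraMap ℂ (Dq q) γ}

variable {q c w γ : ℂ} {ℓ : ℕ}

lemma smul_mem' (s : ℂ) {v : Dq q} (h : v ∈ Ig q ℓ c w γ) : s • v ∈ Ig q ℓ c w γ := by
  rw [← algebraMap_smul (Dq q) s v]; exact Submodule.smul_mem _ _ h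

lemma mem_alpha (u : Dq q) : u * Dα q - γ • u ∈ Ig q ℓ c w γ := by
  have h : u * Dα q - γ • u = u • (Dα q - algebraMap ℂ (Dq q) γ) := by
    rw [smul_eq_mul, mul_sub, Algebra.smul_def, Algebra.commutes]
  rw [h]
  exact Submodule.smul_mem _ _ (Submodule.subset_span (by simp))

lemma main1 (k m : ℕ) :
    (Dd q)^m * (Dx q)^(k+m)
      - (∏ i ∈ Finset.range m, (q^(2*(k+i+1)) * γ - 1)) • (Dx q)^k ∈ Ig q ℓ c w γ := by
  induction m with
  | zero => simp
  | succ n ih =>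
    have h : (Dd q)^(n+1) * (Dx q)^(k+(n+1))
        - (∏ i ∈ Finset.range (n+1), (q^(2*(k+i+1)) * γ - 1)) • (Dx q)^k
        = (q^(2*(k+n+1))) • ((Dd q)^n*(Dx q)^(k+n) * Dα q - γ • ((Dd q)^n*(Dx q)^(k+n)))
          + (q^(2*(k+n+1)) * γ - 1) •
            ((Dd q)^n*(Dx q)^(k+n)
              - (∏ i ∈ Finset.range n, (q^(2*(k+i+1)) * γ - 1)) • (Dx q)^k) := by
      rw [keyx, Finset.prod_range_succ]
      match_scalars <;> ring
    rw [h]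
    exact add_mem (smul_mem' _ (mem_alpha _)) (smul_mem' _ ih)

lemma main2 (hq0 : q ≠ 0) (k m : ℕ) :
    (Dx q)^m * (Dd q)^(k+m)
      - (∏ i ∈ Finset.range m, ((q^(2*(k+i)))⁻¹ * γ - 1)) • (Dd q)^k ∈ Ig q ℓ c w γ := by
  induction m with
  | zero => simp
  | succ n ih =>
    have ht : (q^(2*(k+n)) : ℂ) ≠ 0 := pow_ne_zero _ hq0
    have h : q^(2*(k+n)) • ((Dx q)^(n+1) * (Dd q)^(k+(n+1))
        - (∏ i ∈ Finset.range (n+1), ((q^(2*(k+i)))⁻¹ * γ - 1)) • (Dd q)^k)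
        = ((Dx q)^n*(Dd q)^(k+n) * Dα q - γ • ((Dx q)^n*(Dd q)^(k+n)))
          + (γ - q^(2*(k+n))) •
            ((Dx q)^n*(Dd q)^(k+n)
              - (∏ i ∈ Finset.range n, ((q^(2*(k+i)))⁻¹ * γ - 1)) • (Dd q)^k) := by
      have hs : q^(2*(k+n)) * (∏ i ∈ Finset.range (n+1), ((q^(2*(k+i)))⁻¹ * γ - 1))
          = (γ - q^(2*(k+n))) * ∏ i ∈ Finset.range n, ((q^(2*(k+i)))⁻¹ * γ - 1) := by
        have h1 : q^(2*(k+n)) * ((q^(2*(k+n)))⁻¹ * γ - 1) = γ - q^(2*(k+n)) := by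
          rw [mul_sub, ← mul_assoc, mul_inv_cancel₀ ht, one_mul, mul_one]
        rw [Finset.prod_range_succ, show q^(2*(k+n)) * ((∏ i ∈ Finset.range n,
            ((q^(2*(k+i)))⁻¹ * γ - 1)) * ((q^(2*(k+n)))⁻¹ * γ - 1))
          = (q^(2*(k+n)) * ((q^(2*(k+n)))⁻¹ * γ - 1)) * ∏ i ∈ Finset.range n,
            ((q^(2*(k+i)))⁻¹ * γ - 1) from by ring, h1]
      rw [smul_sub, keyd, smul_smul, hs, ← smul_smul]
      match_scalars <;> ring
    have h2 : (Dx q)^(n+1) * (Dd q)^(k+(n+1))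
        - (∏ i ∈ Finset.range (n+1), ((q^(2*(k+i)))⁻¹ * γ - 1)) • (Dd q)^k
        = (q^(2*(k+n)))⁻¹ • (q^(2*(k+n)) • ((Dx q)^(n+1) * (Dd q)^(k+(n+1))
            - (∏ i ∈ Finset.range (n+1), ((q^(2*(k+i)))⁻¹ * γ - 1)) • (Dd q)^k)) := by
      rw [smul_smul, inv_mul_cancel₀ ht, one_smul]
    rw [h2, h]
    exact smul_mem' _ (add_mem (mem_alpha _) (smul_mem' _ ih))

/-- in `D_P = D_q(ℂ)/D_q(ℂ)(x^ℓ − c, ∂^ℓ − w, α − γ)` (quotient by the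
left ideal), for `1 ≤ m ≤ ℓ` one has
`c·∂^m = ∏_{i=ℓ−m+1}^{ℓ}(q^{2i}γ − 1) x^{ℓ−m}` and
`w·x^m = ∏_{i=1}^{m}(q^{2i}γ − 1) ∂^{ℓ−m}`. -/
theorem dq_point_module_relations (q : ℂ) (ℓ : ℕ) (hℓ : 1 < ℓ)
    (hq : IsPrimitiveRoot q ℓ) (c w γ : ℂ) (hcw : 1 + c * w ≠ 0)
    (hγ : γ ^ ℓ = 1 + c * w) (m : ℕ) (hm1 : 1 ≤ m) (hm2 : m ≤ ℓ) :
    letI I : Submodule (Dq q) (Dq q) := Submodule.span (Dq q)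
        {(Dx q) ^ ℓ - algebraMap ℂ (Dq q) c,
         (Dd q) ^ ℓ - algebraMap ℂ (Dq q) w,
         Dα q - algebraMap ℂ (Dq q) γ}
    (Submodule.Quotient.mk (p := I) (c • (Dd q) ^ m)
        = Submodule.Quotient.mk (p := I)
          ((∏ i ∈ Finset.Icc (ℓ - m + 1) ℓ, (q ^ (2 * i) * γ - 1)) • (Dx q) ^ (ℓ - m))) ∧
    (Submodule.Quotient.mk (p := I) (w • (Dx q) ^ m)
        = Submodule.Quotient.mk (p := I)
          ((∏ i ∈ Finset.Icc 1 m, (q ^ (2 * i) * γ - 1)) • (Dd q) ^ (ℓ - m))) := by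
  have hq0 : q ≠ 0 := hq.ne_zero (by omega)
  have hql : q ^ ℓ = 1 := hq.pow_eq_one
  constructor
  · rw [Submodule.Quotient.eq]
    have hmem1 : (Dd q)^m * ((Dx q)^ℓ - algebraMap ℂ (Dq q) c) ∈ Ig q ℓ c w γ :=
      Submodule.smul_mem _ _ (Submodule.subset_span (by simp))
    have hmain := main1 (q := q) (ℓ := ℓ) (c := c) (w := w) (γ := γ) (ℓ - m) m
    rw [Nat.sub_add_cancel hm2] at hmain
    have hprod : (∏ i ∈ Finset.range m, (q^(2*(ℓ-m+i+1)) * γ - 1))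
        = ∏ i ∈ Finset.Icc (ℓ-m+1) ℓ, (q^(2*i) * γ - 1) := by
      rw [← Finset.Ico_add_one_right_eq_Icc, Finset.prod_Ico_eq_prod_range,
        show ℓ + 1 - (ℓ - m + 1) = m by omega]
      exact Finset.prod_congr rfl fun i hi => by
        rw [show ℓ - m + i + 1 = ℓ - m + 1 + i by omega]
    rw [hprod] at hmain
    have hkey : c • (Dd q)^m
          - (∏ i ∈ Finset.Icc (ℓ-m+1) ℓ, (q^(2*i) * γ - 1)) • (Dx q)^(ℓ-m)
        = ((Dd q)^m * (Dx q)^ℓ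
            - (∏ i ∈ Finset.Icc (ℓ-m+1) ℓ, (q^(2*i) * γ - 1)) • (Dx q)^(ℓ-m))
          - (Dd q)^m * ((Dx q)^ℓ - algebraMap ℂ (Dq q) c) := by
      rw [mul_sub, Algebra.smul_def, Algebra.commutes]; abel
    rw [hkey]
    exact sub_mem hmain hmem1
  · rw [Submodule.Quotient.eq]
    have hmem2 : (Dx q)^m * ((Dd q)^ℓ - algebraMap ℂ (Dq q) w) ∈ Ig q ℓ c w γ :=
      Submodule.smul_mem _ _ (Submodule.subset_span (by simp))
    have hmain := main2 (q := q) (ℓ := ℓ) (c := c) (w := w) (γ := γ) hq0 (ℓ - m) m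
    rw [Nat.sub_add_cancel hm2] at hmain
    have hprod : (∏ i ∈ Finset.range m, ((q^(2*(ℓ-m+i)))⁻¹ * γ - 1))
        = ∏ i ∈ Finset.Icc 1 m, (q^(2*i) * γ - 1) := by
      have h1 : (∏ i ∈ Finset.range m, ((q^(2*(ℓ-m+i)))⁻¹ * γ - 1))
          = ∏ i ∈ Finset.range m, (q^(2*(m-i)) * γ - 1) := by
        refine Finset.prod_congr rfl fun i hi => ?_
        have hi' : i < m := Finset.mem_range.mp hi
        have : (q^(2*(ℓ-m+i)))⁻¹ = q^(2*(m-i)) := by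
          apply inv_eq_of_mul_eq_one_right
          rw [← pow_add, show 2*(ℓ-m+i) + 2*(m-i) = ℓ*2 by omega, pow_mul, hql, one_pow]
        rw [this]
      have h2 : (∏ i ∈ Finset.range m, (q^(2*(m-i)) * γ - 1))
          = ∏ i ∈ Finset.range m, (q^(2*(i+1)) * γ - 1) := by
        rw [← Finset.prod_range_reflect (fun j => q^(2*(j+1)) * γ - 1) m]
        refine Finset.prod_congr rfl fun i hi => ?_
        have hi' : i < m := Finset.mem_range.mp hi
        rw [show m - 1 - i + 1 = m - i by omega]
      have h3 : (∏ i ∈ Finset.Icc 1 m, (q^(2*i) * γ - 1))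
          = ∏ i ∈ Finset.range m, (q^(2*(i+1)) * γ - 1) := by
        rw [← Finset.Ico_add_one_right_eq_Icc, Finset.prod_Ico_eq_prod_range,
          show m + 1 - 1 = m from rfl]
        exact Finset.prod_congr rfl fun i hi => by rw [show 1 + i = i + 1 by omega]
      rw [h1, h2, h3]
    rw [hprod] at hmain
    have hkey : w • (Dx q)^m
          - (∏ i ∈ Finset.Icc 1 m, (q^(2*i) * γ - 1)) • (Dd q)^(ℓ-m)
        = ((Dx q)^m * (Dd q)^ℓ
            - (∏ i ∈ Finset.Icc 1 m, (q^(2*i) * γ - 1)) • (Dd q)^(ℓ-m))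
          - (Dx q)^m * ((Dd q)^ℓ - algebraMap ℂ (Dq q) w) := by
      rw [mul_sub, Algebra.smul_def, Algebra.commutes]; abel
    rw [hkey]
    exact sub_mem hmain hmem2
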